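/- Let a > b > 0, c² = a² − b², and t ∈ ℝ. For the triangle P₁P₂P₃ of the incircle family with P₁ = (a·cos t, b·sin t), P₂ = w₂·(a²·cos t − w₁·sin t, b²·sin t + w₁·cos t), P₃ = w₂·(a²·cos t + w₁·sin t, b²·sin t − w₁·cos t), where w₁ = sqrt(c²(a+b)²·cos²t + 2ab³ + b⁴) and w₂ = −ab/((c²·cos²t + b²)(a+b)), the cosine of the interior angle at P₁ equals ((a⁴ + 2a³b − 2ab³ − b⁴)·cos²t − a²b² + 2ab³ + b⁴) / ((a+b)²·(c²·cos²t + b²)). -/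

import Mathlib

open EuclideanGeometry
open scoped RealInnerProductSpace

/-- The point of the plane with coordinates `(x, y)`. -/
noncomputable def pt (x y : ℝ) : EuclideanSpace ℝ (Fin 2) := WithLp.toLp 2 ![x, y]

lemma pt_vsub (x1 y1 x2 y2 : ℝ) : pt x1 y1 -ᵥ pt x2 y2 = pt (x1 - x2) (y1 - y2) := by
  ext i
  fin_cases i <;> simp [pt, vsub_eq_sub]

lemma pt_inner (x1 y1 x2 y2 : ℝ) :
    ⟪(pt x1 y1 : EuclideanSpace ℝ (Fin 2)), pt x2 y2⟫ = x1 * x2 + y1 * y2 := by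
  simp [pt, PiLp.inner_apply, Fin.sum_univ_two, RCLike.inner_apply]
  ring

set_option maxHeartbeats 2000000 in
/-- For the explicitly parametrized incircle-family triangle `P₁P₂P₃`
(`a > b > 0`, `c² = a² - b²`), the cosine of the interior angle at `P₁` equals
`((a⁴ + 2a³b - 2ab³ - b⁴)cos²t - a²b² + 2ab³ + b⁴) / ((a+b)²(c²cos²t + b²))`. -/
theorem incircle_family_cosine_at_P1 (a b c t : ℝ) (hb : 0 < b) (hab : b < a)
    (hc : c ^ 2 = a ^ 2 - b ^ 2)
    (w₁ w₂ : ℝ)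
    (hw₁ : w₁ = Real.sqrt (c ^ 2 * (a + b) ^ 2 * Real.cos t ^ 2 + 2 * a * b ^ 3 + b ^ 4))
    (hw₂ : w₂ = -(a * b) / ((c ^ 2 * Real.cos t ^ 2 + b ^ 2) * (a + b)))
    (P₁ P₂ P₃ : EuclideanSpace ℝ (Fin 2))
    (hP₁ : P₁ = pt (a * Real.cos t) (b * Real.sin t))
    (hP₂ : P₂ = pt (w₂ * (a ^ 2 * Real.cos t - w₁ * Real.sin t))
                   (w₂ * (b ^ 2 * Real.sin t + w₁ * Real.cos t)))
    (hP₃ : P₃ = pt (w₂ * (a ^ 2 * Real.cos t + w₁ * Real.sin t))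
                   (w₂ * (b ^ 2 * Real.sin t - w₁ * Real.cos t))) :
    Real.cos (∠ P₂ P₁ P₃) =
      ((a ^ 4 + 2 * a ^ 3 * b - 2 * a * b ^ 3 - b ^ 4) * Real.cos t ^ 2
          - a ^ 2 * b ^ 2 + 2 * a * b ^ 3 + b ^ 4) /
        ((a + b) ^ 2 * (c ^ 2 * Real.cos t ^ 2 + b ^ 2)) := by
  have ha : 0 < a := hb.trans hab
  set C := Real.cos t with hCdef
  set S := Real.sin t with hSdef
  have hs : S ^ 2 = 1 - C ^ 2 := by
    have := Real.sin_sq_add_cos_sq t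
    rw [hSdef, hCdef]; linarith
  have hc2 : 0 < c ^ 2 := by rw [hc]; nlinarith
  have hE : 0 < c ^ 2 * C ^ 2 + b ^ 2 := by positivity
  have habp : 0 < a + b := by linarith
  have hD : 0 < (c ^ 2 * C ^ 2 + b ^ 2) * (a + b) := by positivity
  have hW : w₁ ^ 2 = c ^ 2 * (a + b) ^ 2 * C ^ 2 + 2 * a * b ^ 3 + b ^ 4 := by
    rw [hw₁]; exact Real.sq_sqrt (by positivity)
  have hw2 : w₂ * ((c ^ 2 * C ^ 2 + b ^ 2) * (a + b)) = -(a * b) := by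
    rw [hw₂]; field_simp
  -- coordinates of the two edge vectors
  set u0 : ℝ := w₂ * (a ^ 2 * C - w₁ * S) - a * C with hu0
  set u1 : ℝ := w₂ * (b ^ 2 * S + w₁ * C) - b * S with hu1
  set v0 : ℝ := w₂ * (a ^ 2 * C + w₁ * S) - a * C with hv0
  set v1 : ℝ := w₂ * (b ^ 2 * S - w₁ * C) - b * S with hv1
  have hu : P₂ -ᵥ P₁ = pt u0 u1 := by rw [hP₂, hP₁, pt_vsub]
  have hv : P₃ -ᵥ P₁ = pt v0 v1 := by rw [hP₃, hP₁, pt_vsub]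
  -- scaled (denominator-cleared) coordinates
  set D : ℝ := (c ^ 2 * C ^ 2 + b ^ 2) * (a + b) with hDdef
  have e0 : u0 * D = -(a * b) * (a ^ 2 * C - w₁ * S) - a * C * D := by
    rw [hu0, hDdef]; linear_combination (a ^ 2 * C - w₁ * S) * hw2
  have e1 : u1 * D = -(a * b) * (b ^ 2 * S + w₁ * C) - b * S * D := by
    rw [hu1, hDdef]; linear_combination (b ^ 2 * S + w₁ * C) * hw2
  have f0 : v0 * D = -(a * b) * (a ^ 2 * C + w₁ * S) - a * C * D := by
    rw [hv0, hDdef]; linear_combination (a ^ 2 * C + w₁ * S) * hw2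
  have f1 : v1 * D = -(a * b) * (b ^ 2 * S - w₁ * C) - b * S * D := by
    rw [hv1, hDdef]; linear_combination (b ^ 2 * S - w₁ * C) * hw2
  set Q : ℝ := c ^ 2 * C ^ 2 + 2 * a * b + b ^ 2 with hQdef
  have hQ : 0 < Q := by rw [hQdef]; positivity
  set N : ℝ := (a ^ 4 + 2 * a ^ 3 * b - 2 * a * b ^ 3 - b ^ 4) * C ^ 2
      - a ^ 2 * b ^ 2 + 2 * a * b ^ 3 + b ^ 4 with hNdef
  -- the two key polynomial identities
  have key2 : (u0 * v0 + u1 * v1) * D ^ 2 = N * Q * (c ^ 2 * C ^ 2 + b ^ 2) := by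
    have expand : (u0 * v0 + u1 * v1) * D ^ 2 = (u0 * D) * (v0 * D) + (u1 * D) * (v1 * D) := by
      ring
    rw [expand, e0, e1, f0, f1, hNdef, hQdef, hDdef]
    linear_combination (-1*a^2*b^2*S^2 - 1*a^2*b^2*C^2) * hW + (b^4*c^4*C^4 + 2*b^6*c^2*C^2 + b^8 + 2*a*b^3*c^4*C^4 + 6*a*b^5*c^2*C^2 + 4*a*b^7 + a^2*b^2*c^4*C^4 + 3*a^2*b^4*c^2*C^2 + 3*a^2*b^6 - 2*a^3*b^3*c^2*C^2 - 2*a^3*b^5 - 1*a^4*b^2*c^2*C^2) * hs + (2*a^2*b^2*c^2*C^4 + a^2*b^4*C^2 - 1*a^4*b^2*C^2) * hc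
  have key3 : (u0 * D) * (v1 * D) - (u1 * D) * (v0 * D) =
      -(2 * a * b) * w₁ * ((c ^ 2 * C ^ 2 + b ^ 2) * Q) := by
    rw [e0, e1, f0, f1, hQdef, hDdef]
    linear_combination (-2*a*b^3*c^2*C^2*w₁ - 2*a*b^5*w₁ - 2*a^2*b^2*c^2*C^2*w₁ - 4*a^2*b^4*w₁) * hs + (2*a*b*c^2*C^4*w₁ + 2*a*b^3*C^2*w₁ + 2*a^2*b^2*C^2*w₁) * hc
  have key4 : N ^ 2 + 4 * a ^ 2 * b ^ 2 * (c ^ 2 * (a + b) ^ 2 * C ^ 2 + 2 * a * b ^ 3 + b ^ 4)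
      = (c ^ 2 * C ^ 2 + b ^ 2) ^ 2 * (a + b) ^ 4 := by
    rw [hNdef]
    linear_combination (-1*b^4*c^2*C^4 - 2*b^6*C^2 + b^6*C^4 - 4*a*b^3*c^2*C^4 - 8*a*b^5*C^2 + 4*a*b^5*C^4 - 6*a^2*b^2*c^2*C^4 - 8*a^2*b^4*C^2 + 5*a^2*b^4*C^4 - 4*a^3*b*c^2*C^4 - 1*a^4*c^2*C^4 + 2*a^4*b^2*C^2 - 5*a^4*b^2*C^4 - 4*a^5*b*C^4 - 1*a^6*C^4) * hc
  have key1 : ((u0 ^ 2 + u1 ^ 2) * (v0 ^ 2 + v1 ^ 2)) * D ^ 4 = (Q * D ^ 2) ^ 2 := by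
    have lag : ((u0 ^ 2 + u1 ^ 2) * (v0 ^ 2 + v1 ^ 2)) * D ^ 4 =
        ((u0 * v0 + u1 * v1) * D ^ 2) ^ 2 + ((u0 * D) * (v1 * D) - (u1 * D) * (v0 * D)) ^ 2 := by
      ring
    rw [lag, key2, key3, hDdef]
    linear_combination (4 * a ^ 2 * b ^ 2 * (c ^ 2 * C ^ 2 + b ^ 2) ^ 2 * Q ^ 2) * hW
      + ((c ^ 2 * C ^ 2 + b ^ 2) ^ 2 * Q ^ 2) * key4
  -- norms and inner product
  have hinner : ⟪P₂ -ᵥ P₁, P₃ -ᵥ P₁⟫ = u0 * v0 + u1 * v1 := by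
    rw [hu, hv, pt_inner]
  have hnu : ‖P₂ -ᵥ P₁‖ ^ 2 = u0 ^ 2 + u1 ^ 2 := by
    rw [← real_inner_self_eq_norm_sq, hu, pt_inner]; ring
  have hnv : ‖P₃ -ᵥ P₁‖ ^ 2 = v0 ^ 2 + v1 ^ 2 := by
    rw [← real_inner_self_eq_norm_sq, hv, pt_inner]; ring
  have hprod_sq : (‖P₂ -ᵥ P₁‖ * ‖P₃ -ᵥ P₁‖) ^ 2 = Q ^ 2 := by
    have hD4 : D ^ 4 ≠ 0 := by positivity
    have : ((u0 ^ 2 + u1 ^ 2) * (v0 ^ 2 + v1 ^ 2)) = Q ^ 2 := by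
      apply mul_right_cancel₀ hD4
      rw [key1]; ring
    rw [mul_pow, hnu, hnv, this]
  have hprod : ‖P₂ -ᵥ P₁‖ * ‖P₃ -ᵥ P₁‖ = Q := by
    have h1 : 0 ≤ ‖P₂ -ᵥ P₁‖ * ‖P₃ -ᵥ P₁‖ := by positivity
    calc ‖P₂ -ᵥ P₁‖ * ‖P₃ -ᵥ P₁‖ = Real.sqrt ((‖P₂ -ᵥ P₁‖ * ‖P₃ -ᵥ P₁‖) ^ 2) :=
          (Real.sqrt_sq h1).symm
      _ = Real.sqrt (Q ^ 2) := by rw [hprod_sq]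
      _ = Q := Real.sqrt_sq hQ.le
  have hcos : Real.cos (∠ P₂ P₁ P₃) = ⟪P₂ -ᵥ P₁, P₃ -ᵥ P₁⟫ / (‖P₂ -ᵥ P₁‖ * ‖P₃ -ᵥ P₁‖) := by
    rw [EuclideanGeometry.angle, InnerProductGeometry.cos_angle]
  have huv : u0 * v0 + u1 * v1 = N * Q * (c ^ 2 * C ^ 2 + b ^ 2) / D ^ 2 := by
    field_simp
    linear_combination key2
  rw [hcos, hprod, hinner, huv, hDdef]
  rw [hNdef]
  field_simp
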